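/- With Q as above and p = (p₀, P₁, P₂, p₃) with p₃ ≠ 0, define H_p to be the polar derivative of Q at p (the directional derivative of Q in direction p), and f = 2p₃·Q - (β + ⟨A,B⟩/(3p₃))·H_p. Then the Taylor expansion of f at x₀ = (1,0,0,0) has lowest-degree term (2p₃/3)·C*(B⊗³) plus terms divisible by β of order ≥ 3 and terms of order ≥ 4; consequently the tangent cone of the scheme {Q = 0, H_p = 0} at x₀ is contained in {β = 0, C*(B⊗³) = 0}. -/

import Mathlib

/-!
STATEMENT 9:
With `Q` as in Statement 8 and `p = (p₀, P₁, P₂, p₃)` with `p₃ ≠ 0`, let `H_p`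
be the polar derivative of `Q` at `p` (the directional derivative of `Q` in the
direction `p`), and `f = 2p₃·Q - (β + ⟨A,B⟩/(3p₃))·H_p`.  Then the Taylor
expansion of `f` at `x₀ = (1,0,0,0)` has vanishing homogeneous parts in degrees
`0, 1, 2`, and its degree-3 part (the lowest-degree term) equals
`(2p₃/3)·C*(B⊗³)` plus `β` times a quadratic form; consequently the tangent
cone of the scheme `{Q = 0, H_p = 0}` at `x₀` is contained in
`{β = 0, C*(B⊗³) = 0}`.
-/

open MvPolynomial

/-- Index type for the coordinates `(α, A, B, β)` of `V = ℂ ⊕ W ⊕ W* ⊕ ℂ`. -/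
abbrev VIdx (n : ℕ) := (Unit ⊕ Fin n) ⊕ (Fin n ⊕ Unit)

def αv {n : ℕ} : VIdx n := Sum.inl (Sum.inl ())
def Av {n : ℕ} (i : Fin n) : VIdx n := Sum.inl (Sum.inr i)
def Bv {n : ℕ} (i : Fin n) : VIdx n := Sum.inr (Sum.inl i)
def βv {n : ℕ} : VIdx n := Sum.inr (Sum.inr ())

/-- The pairing `⟨A,B⟩ = ∑ Aᵢ Bᵢ` as a polynomial. -/
noncomputable def pairingPoly (n : ℕ) : MvPolynomial (VIdx n) ℂ :=
  ∑ i : Fin n, X (Av i) * X (Bv i)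

/-- The quartic `Q` built from the cubics `c = C` and `c' = C*`. -/
noncomputable def quarticQ (n : ℕ) (c c' : MvPolynomial (Fin n) ℂ) :
    MvPolynomial (VIdx n) ℂ :=
  (C 3 * X αv * X βv - C (1 / 2 : ℂ) * pairingPoly n) ^ 2
    + C (1 / 3 : ℂ) * (X βv * rename Av c + X αv * rename Bv c')
    - C (1 / 54 : ℂ) *
        ∑ i : Fin n, pderiv (Av i) (rename Av c) * pderiv (Bv i) (rename Bv c')

/-- The polar `H_p = p₀ ∂Q/∂α + P₁·∂Q/∂A + P₂·∂Q/∂B + p₃ ∂Q/∂β`. -/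
noncomputable def polarH (n : ℕ) (c c' : MvPolynomial (Fin n) ℂ)
    (p₀ : ℂ) (P₁ P₂ : Fin n → ℂ) (p₃ : ℂ) : MvPolynomial (VIdx n) ℂ :=
  C p₀ * pderiv αv (quarticQ n c c')
    + ∑ i : Fin n, C (P₁ i) * pderiv (Av i) (quarticQ n c c')
    + ∑ i : Fin n, C (P₂ i) * pderiv (Bv i) (quarticQ n c c')
    + C p₃ * pderiv βv (quarticQ n c c')

/-- Taylor expansion at `x₀ = (1,0,0,0)`: substitute `α ↦ α + 1`. -/
noncomputable def taylorAtx₀ {n : ℕ} (f : MvPolynomial (VIdx n) ℂ) :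
    MvPolynomial (VIdx n) ℂ :=
  aeval (fun v : VIdx n => if v = αv then X αv + 1 else X v) f

lemma Av_injective {n : ℕ} : Function.Injective (Av (n := n)) := fun i j h => by
  simpa [Av] using h

lemma Bv_injective {n : ℕ} : Function.Injective (Bv (n := n)) := fun i j h => by
  simpa [Bv] using h

lemma pderiv_rename_zero {σ τ : Type*} (f : σ → τ) (v : τ) (hv : ∀ s, f s ≠ v)
    (p : MvPolynomial σ ℂ) : pderiv v (rename f p) = 0 := by
  induction p using MvPolynomial.induction_on with
  | C a => simp
  | add p q hp hq => simp [hp, hq]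
  | mul_X p s hp => simp [pderiv_mul, hp, pderiv_X_of_ne (hv s)]

lemma isHomogeneous_pderiv {σ : Type*} {p : MvPolynomial σ ℂ} {m nn : ℕ}
    (h : p.IsHomogeneous nn) (hmn : m + 1 = nn) (v : σ) :
    (pderiv v p).IsHomogeneous m := by
  classical
  rw [p.as_sum, map_sum]
  apply IsHomogeneous.sum
  intro d hd
  rw [pderiv_monomial]
  by_cases hdv : d v = 0
  · rw [hdv]
    norm_num
    exact isHomogeneous_zero _ _ _
  · apply isHomogeneous_monomial
    have hdeg : (Finsupp.weight 1) d = nn := h (mem_support_iff.mp hd)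
    have hle : Finsupp.single v 1 ≤ d := by
      rw [Finsupp.single_le_iff]; omega
    have hsum : (d - Finsupp.single v 1) + Finsupp.single v 1 = d :=
      tsub_add_cancel_of_le hle
    have hw : (Finsupp.weight 1) (d - Finsupp.single v 1)
        + (Finsupp.weight 1) (Finsupp.single v 1) = nn := by
      rw [← map_add, hsum, hdeg]
    have hws : (Finsupp.weight (1 : σ → ℕ)) (Finsupp.single v 1) = 1 := by
      simp [Finsupp.weight_apply, Finsupp.sum_single_index]
    rw [Finsupp.degree_eq_weight_one]
    rw [show (fun _ : σ => (1 : ℕ)) = 1 from rfl]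
    omega

-- ### the shift as an algebra hom
noncomputable def TA (n : ℕ) :
    MvPolynomial (VIdx n) ℂ →ₐ[ℂ] MvPolynomial (VIdx n) ℂ :=
  aeval (fun v : VIdx n => if v = αv then X αv + 1 else X v)

lemma taylor_eq_TA {n : ℕ} (f : MvPolynomial (VIdx n) ℂ) :
    taylorAtx₀ f = TA n f := rfl

@[simp] lemma TA_C {n : ℕ} (r : ℂ) : TA n (C r) = C r := by
  simp [TA, algebraMap_eq]

@[simp] lemma TA_X_α {n : ℕ} : TA n (X αv) = X αv + 1 := by simp [TA]

@[simp] lemma TA_X_β {n : ℕ} : TA n (X (βv : VIdx n)) = X βv := by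
  simp [TA, βv, αv]

@[simp] lemma TA_X_A {n : ℕ} (i : Fin n) : TA n (X (Av i)) = X (Av i) := by
  simp [TA, Av, αv]

@[simp] lemma TA_X_B {n : ℕ} (i : Fin n) : TA n (X (Bv i)) = X (Bv i) := by
  simp [TA, Bv, αv]

@[simp] lemma TA_renAv {n : ℕ} (p : MvPolynomial (Fin n) ℂ) :
    TA n (rename Av p) = rename Av p := by
  show aeval _ (rename Av p) = _
  rw [aeval_rename]
  have hfn : ((fun v : VIdx n => if v = αv then X αv + 1 else X v) ∘ Av)
      = fun i : Fin n => (X (Av i) : MvPolynomial (VIdx n) ℂ) :=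
    funext fun i => by simp [Av, αv]
  rw [hfn]
  rw [rename_eq_aeval]; rfl

@[simp] lemma TA_renBv {n : ℕ} (p : MvPolynomial (Fin n) ℂ) :
    TA n (rename Bv p) = rename Bv p := by
  show aeval _ (rename Bv p) = _
  rw [aeval_rename]
  have hfn : ((fun v : VIdx n => if v = αv then X αv + 1 else X v) ∘ Bv)
      = fun i : Fin n => (X (Bv i) : MvPolynomial (VIdx n) ℂ) :=
    funext fun i => by simp [Bv, αv]
  rw [hfn]
  rw [rename_eq_aeval]; rfl

@[simp] lemma TA_S {n : ℕ} : TA n (pairingPoly n) = pairingPoly n := by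
  simp [pairingPoly, map_sum]

-- ### building blocks
noncomputable def uu (n : ℕ) : MvPolynomial (VIdx n) ℂ :=
  C 3 * X αv * X βv - C (1 / 2 : ℂ) * pairingPoly n

noncomputable def KK (n : ℕ) (c c' : MvPolynomial (Fin n) ℂ) :
    MvPolynomial (VIdx n) ℂ :=
  ∑ i : Fin n, pderiv (Av i) (rename Av c) * pderiv (Bv i) (rename Bv c')

noncomputable def KA (n : ℕ) (c c' : MvPolynomial (Fin n) ℂ) (j : Fin n) :
    MvPolynomial (VIdx n) ℂ :=
  ∑ i : Fin n, rename Av (pderiv j (pderiv i c)) * rename Bv (pderiv i c')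

noncomputable def KB (n : ℕ) (c c' : MvPolynomial (Fin n) ℂ) (j : Fin n) :
    MvPolynomial (VIdx n) ℂ :=
  ∑ i : Fin n, rename Av (pderiv i c) * rename Bv (pderiv j (pderiv i c'))

lemma quarticQ_eq (n : ℕ) (c c' : MvPolynomial (Fin n) ℂ) :
    quarticQ n c c' = uu n ^ 2
      + C (1 / 3 : ℂ) * (X βv * rename Av c + X αv * rename Bv c')
      - C (1 / 54 : ℂ) * KK n c c' := rfl

lemma KK_eq (n : ℕ) (c c' : MvPolynomial (Fin n) ℂ) :
    KK n c c' = ∑ i : Fin n, rename Av (pderiv i c) * rename Bv (pderiv i c') := by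
  refine Finset.sum_congr rfl fun i _ => ?_
  rw [pderiv_rename Av_injective, pderiv_rename Bv_injective]

@[simp] lemma TA_KK {n : ℕ} (c c' : MvPolynomial (Fin n) ℂ) :
    TA n (KK n c c') = KK n c c' := by
  rw [KK_eq, map_sum]
  simp

@[simp] lemma TA_KA {n : ℕ} (c c' : MvPolynomial (Fin n) ℂ) (j : Fin n) :
    TA n (KA n c c' j) = KA n c c' j := by
  rw [KA, map_sum]; simp

@[simp] lemma TA_KB {n : ℕ} (c c' : MvPolynomial (Fin n) ℂ) (j : Fin n) :
    TA n (KB n c c' j) = KB n c c' j := by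
  rw [KB, map_sum]; simp

lemma TA_uu {n : ℕ} : TA n (uu n) = uu n + C 3 * X βv := by
  rw [uu]
  simp only [map_sub, map_mul, TA_C, TA_X_α, TA_X_β, TA_S]
  ring

-- ### pderivs of the pairing
lemma pS_α {n : ℕ} : pderiv (αv : VIdx n) (pairingPoly n) = 0 := by
  rw [pairingPoly, map_sum]
  refine Finset.sum_eq_zero fun i _ => ?_
  rw [pderiv_mul]
  rw [pderiv_X_of_ne (by simp [Av, αv]), pderiv_X_of_ne (by simp [Bv, αv])]
  ring

lemma pS_β {n : ℕ} : pderiv (βv : VIdx n) (pairingPoly n) = 0 := by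
  rw [pairingPoly, map_sum]
  refine Finset.sum_eq_zero fun i _ => ?_
  rw [pderiv_mul]
  rw [pderiv_X_of_ne (by simp [Av, βv]), pderiv_X_of_ne (by simp [Bv, βv])]
  ring

lemma pS_A {n : ℕ} (j : Fin n) :
    pderiv (Av j) (pairingPoly n) = X (Bv j) := by
  classical
  rw [pairingPoly, map_sum]
  rw [Finset.sum_eq_single j
    (fun i _ hij => by
      rw [pderiv_mul, pderiv_X_of_ne (by simp [Av, hij]),
        pderiv_X_of_ne (by simp [Av, Bv])]
      ring)
    (by simp)]
  rw [pderiv_mul, pderiv_X_self, pderiv_X_of_ne (by simp [Av, Bv])]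
  ring

lemma pS_B {n : ℕ} (j : Fin n) :
    pderiv (Bv j) (pairingPoly n) = X (Av j) := by
  classical
  rw [pairingPoly, map_sum]
  rw [Finset.sum_eq_single j
    (fun i _ hij => by
      rw [pderiv_mul, pderiv_X_of_ne (by simp [Av, Bv]),
        pderiv_X_of_ne (by simp [Bv, hij])]
      ring)
    (by simp)]
  rw [pderiv_mul, pderiv_X_self, pderiv_X_of_ne (by simp [Av, Bv])]
  ring

-- ### pderivs of uu
lemma pu_α {n : ℕ} : pderiv (αv : VIdx n) (uu n) = C 3 * X βv := by
  rw [uu, map_sub, pderiv_mul, pderiv_mul, pderiv_C_mul, pS_α, pderiv_C,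
    pderiv_X_self, pderiv_X_of_ne (by simp [βv, αv])]
  ring

lemma pu_β {n : ℕ} : pderiv (βv : VIdx n) (uu n) = C 3 * X αv := by
  rw [uu, map_sub, pderiv_mul, pderiv_mul, pderiv_C_mul, pS_β, pderiv_C,
    pderiv_X_self, pderiv_X_of_ne (by simp [βv, αv])]
  ring

lemma pu_A {n : ℕ} (j : Fin n) :
    pderiv (Av j) (uu n) = -(C (1 / 2 : ℂ) * X (Bv j)) := by
  rw [uu, map_sub, pderiv_mul, pderiv_mul, pderiv_C_mul, pS_A, pderiv_C,
    pderiv_X_of_ne (by simp [Av, αv]), pderiv_X_of_ne (by simp [Av, βv])]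
  ring

lemma pu_B {n : ℕ} (j : Fin n) :
    pderiv (Bv j) (uu n) = -(C (1 / 2 : ℂ) * X (Av j)) := by
  rw [uu, map_sub, pderiv_mul, pderiv_mul, pderiv_C_mul, pS_B, pderiv_C,
    pderiv_X_of_ne (by simp [Bv, αv]), pderiv_X_of_ne (by simp [Bv, βv])]
  ring

-- ### pderivs of KK
lemma pK_α {n : ℕ} (c c' : MvPolynomial (Fin n) ℂ) :
    pderiv (αv : VIdx n) (KK n c c') = 0 := by
  rw [KK_eq, map_sum]
  refine Finset.sum_eq_zero fun i _ => ?_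
  rw [pderiv_mul, pderiv_rename_zero _ _ (fun s => by simp [Av, αv]),
    pderiv_rename_zero _ _ (fun s => by simp [Bv, αv])]
  ring

lemma pK_β {n : ℕ} (c c' : MvPolynomial (Fin n) ℂ) :
    pderiv (βv : VIdx n) (KK n c c') = 0 := by
  rw [KK_eq, map_sum]
  refine Finset.sum_eq_zero fun i _ => ?_
  rw [pderiv_mul, pderiv_rename_zero _ _ (fun s => by simp [Av, βv]),
    pderiv_rename_zero _ _ (fun s => by simp [Bv, βv])]
  ring

lemma pK_A {n : ℕ} (c c' : MvPolynomial (Fin n) ℂ) (j : Fin n) :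
    pderiv (Av j) (KK n c c') = KA n c c' j := by
  rw [KK_eq, map_sum, KA]
  refine Finset.sum_congr rfl fun i _ => ?_
  rw [pderiv_mul, pderiv_rename Av_injective,
    pderiv_rename_zero _ _ (fun s => by simp [Av, Bv]) (pderiv i c')]
  ring

lemma pK_B {n : ℕ} (c c' : MvPolynomial (Fin n) ℂ) (j : Fin n) :
    pderiv (Bv j) (KK n c c') = KB n c c' j := by
  rw [KK_eq, map_sum, KB]
  refine Finset.sum_congr rfl fun i _ => ?_
  rw [pderiv_mul, pderiv_rename Bv_injective,
    pderiv_rename_zero _ _ (fun s => by simp [Av, Bv]) (pderiv i c)]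
  ring

-- ### pderivs of Q
lemma pQ_α {n : ℕ} (c c' : MvPolynomial (Fin n) ℂ) :
    pderiv (αv : VIdx n) (quarticQ n c c')
      = C 6 * X βv * uu n + C (1 / 3 : ℂ) * rename Bv c' := by
  rw [quarticQ_eq, map_sub, map_add, pderiv_pow, pderiv_C_mul, pderiv_C_mul,
    map_add, pderiv_mul, pderiv_mul, pu_α, pK_α,
    pderiv_rename_zero _ _ (fun s => by simp [Av, αv]) c,
    pderiv_rename_zero _ _ (fun s => by simp [Bv, αv]) c',
    pderiv_X_self, pderiv_X_of_ne (by simp [βv, αv])]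
  push_cast [map_ofNat]
  ring

lemma pQ_β {n : ℕ} (c c' : MvPolynomial (Fin n) ℂ) :
    pderiv (βv : VIdx n) (quarticQ n c c')
      = C 6 * X αv * uu n + C (1 / 3 : ℂ) * rename Av c := by
  rw [quarticQ_eq, map_sub, map_add, pderiv_pow, pderiv_C_mul, pderiv_C_mul,
    map_add, pderiv_mul, pderiv_mul, pu_β, pK_β,
    pderiv_rename_zero _ _ (fun s => by simp [Av, βv]) c,
    pderiv_rename_zero _ _ (fun s => by simp [Bv, βv]) c',
    pderiv_X_self, pderiv_X_of_ne (by simp [βv, αv])]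
  push_cast [map_ofNat]
  ring

lemma pQ_A {n : ℕ} (c c' : MvPolynomial (Fin n) ℂ) (j : Fin n) :
    pderiv (Av j) (quarticQ n c c')
      = -(X (Bv j)) * uu n + C (1 / 3 : ℂ) * X βv * rename Av (pderiv j c)
        - C (1 / 54 : ℂ) * KA n c c' j := by
  rw [quarticQ_eq, map_sub, map_add, pderiv_pow, pderiv_C_mul, pderiv_C_mul,
    map_add, pderiv_mul, pderiv_mul, pu_A, pK_A,
    pderiv_rename Av_injective,
    pderiv_rename_zero _ _ (fun s => by simp [Av, Bv]) c',
    pderiv_X_of_ne (by simp [Av, βv]), pderiv_X_of_ne (by simp [Av, αv])]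
  push_cast
  have h2 : (C (1 / 2 : ℂ) : MvPolynomial (VIdx n) ℂ) * 2 = 1 := by
    rw [← map_ofNat (C : ℂ →+* MvPolynomial (VIdx n) ℂ) 2, ← map_mul]
    norm_num
  linear_combination (-(uu n * X (Bv j))) * h2

lemma pQ_B {n : ℕ} (c c' : MvPolynomial (Fin n) ℂ) (j : Fin n) :
    pderiv (Bv j) (quarticQ n c c')
      = -(X (Av j)) * uu n + C (1 / 3 : ℂ) * X αv * rename Bv (pderiv j c')
        - C (1 / 54 : ℂ) * KB n c c' j := by
  rw [quarticQ_eq, map_sub, map_add, pderiv_pow, pderiv_C_mul, pderiv_C_mul,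
    map_add, pderiv_mul, pderiv_mul, pu_B, pK_B,
    pderiv_rename Bv_injective,
    pderiv_rename_zero _ _ (fun s => by simp [Av, Bv]) c,
    pderiv_X_of_ne (by simp [Bv, βv]), pderiv_X_of_ne (by simp [Bv, αv])]
  push_cast
  have h2 : (C (1 / 2 : ℂ) : MvPolynomial (VIdx n) ℂ) * 2 = 1 := by
    rw [← map_ofNat (C : ℂ →+* MvPolynomial (VIdx n) ℂ) 2, ← map_mul]
    norm_num
  linear_combination (-(uu n * X (Av j))) * h2

-- ### named pieces
noncomputable def sB1 (n : ℕ) (P₁ : Fin n → ℂ) : MvPolynomial (VIdx n) ℂ :=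
  ∑ i : Fin n, C (P₁ i) * -(X (Bv i))
noncomputable def sA2 (n : ℕ) (P₂ : Fin n → ℂ) : MvPolynomial (VIdx n) ℂ :=
  ∑ i : Fin n, C (P₂ i) * -(X (Av i))
noncomputable def cc1 (n : ℕ) (c : MvPolynomial (Fin n) ℂ) (P₁ : Fin n → ℂ) :
    MvPolynomial (VIdx n) ℂ :=
  ∑ i : Fin n, C (P₁ i) * rename Av (pderiv i c)
noncomputable def cc2 (n : ℕ) (c' : MvPolynomial (Fin n) ℂ) (P₂ : Fin n → ℂ) :
    MvPolynomial (VIdx n) ℂ :=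
  ∑ i : Fin n, C (P₂ i) * rename Bv (pderiv i c')
noncomputable def kk1 (n : ℕ) (c c' : MvPolynomial (Fin n) ℂ) (P₁ : Fin n → ℂ) :
    MvPolynomial (VIdx n) ℂ :=
  ∑ i : Fin n, C (P₁ i) * KA n c c' i
noncomputable def kk2 (n : ℕ) (c c' : MvPolynomial (Fin n) ℂ) (P₂ : Fin n → ℂ) :
    MvPolynomial (VIdx n) ℂ :=
  ∑ i : Fin n, C (P₂ i) * KB n c c' i

noncomputable def H2p (n : ℕ) (c' : MvPolynomial (Fin n) ℂ)
    (p₀ : ℂ) (P₁ P₂ : Fin n → ℂ) (p₃ : ℂ) : MvPolynomial (VIdx n) ℂ :=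
  C p₃ * C 6 * uu n + C p₃ * C 6 * C 3 * (X αv * X βv)
    + C p₀ * C 6 * C 3 * (X βv * X βv)
    + sB1 n P₁ * (C 3 * X βv) + sA2 n P₂ * (C 3 * X βv)
    + C (1 / 3 : ℂ) * cc2 n c' P₂

noncomputable def H3p (n : ℕ) (c c' : MvPolynomial (Fin n) ℂ)
    (p₀ : ℂ) (P₁ P₂ : Fin n → ℂ) (p₃ : ℂ) : MvPolynomial (VIdx n) ℂ :=
  C p₀ * C 6 * (X βv * uu n) + C p₀ * C (1 / 3 : ℂ) * rename Bv c'
    + sB1 n P₁ * uu n + C (1 / 3 : ℂ) * (X βv * cc1 n c P₁)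
    + -(C (1 / 54 : ℂ)) * kk1 n c c' P₁
    + sA2 n P₂ * uu n + C (1 / 3 : ℂ) * (X αv * cc2 n c' P₂)
    + -(C (1 / 54 : ℂ)) * kk2 n c c' P₂
    + C p₃ * C 6 * (X αv * uu n) + C p₃ * C (1 / 3 : ℂ) * rename Av c

noncomputable def Q4p (n : ℕ) (c c' : MvPolynomial (Fin n) ℂ) :
    MvPolynomial (VIdx n) ℂ :=
  uu n ^ 2 + C (1 / 3 : ℂ) * (X βv * rename Av c + X αv * rename Bv c')
    - C (1 / 54 : ℂ) * KK n c c'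

noncomputable def qpoly (n : ℕ) (c' : MvPolynomial (Fin n) ℂ)
    (p₀ : ℂ) (P₁ P₂ : Fin n → ℂ) (p₃ : ℂ) : MvPolynomial (VIdx n) ℂ :=
  C (2 * p₃) * C 6 * uu n - H2p n c' p₀ P₁ P₂ p₃
    - C (1 / (3 * p₃)) * C p₃ * C 6 * C 3 * pairingPoly n

noncomputable def G4p (n : ℕ) (c c' : MvPolynomial (Fin n) ℂ)
    (p₀ : ℂ) (P₁ P₂ : Fin n → ℂ) (p₃ : ℂ) : MvPolynomial (VIdx n) ℂ :=
  C (2 * p₃) * Q4p n c c' - X βv * H3p n c c' p₀ P₁ P₂ p₃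
    - C (1 / (3 * p₃)) * pairingPoly n * H2p n c' p₀ P₁ P₂ p₃

noncomputable def G5p (n : ℕ) (c c' : MvPolynomial (Fin n) ℂ)
    (p₀ : ℂ) (P₁ P₂ : Fin n → ℂ) (p₃ : ℂ) : MvPolynomial (VIdx n) ℂ :=
  -(C (1 / (3 * p₃)) * pairingPoly n * H3p n c c' p₀ P₁ P₂ p₃)

-- ### Taylor expansion of Q
lemma TA_Q {n : ℕ} (c c' : MvPolynomial (Fin n) ℂ) :
    TA n (quarticQ n c c')
      = (uu n + C 3 * X βv) ^ 2
        + C (1 / 3 : ℂ) * (X βv * rename Av c + (X αv + 1) * rename Bv c')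
        - C (1 / 54 : ℂ) * KK n c c' := by
  rw [quarticQ_eq]
  simp only [map_sub, map_add, map_mul, map_pow, TA_C, TA_X_α, TA_X_β,
    TA_renAv, TA_renBv, TA_KK, TA_uu]

-- ### Taylor expansion of H
lemma TA_H {n : ℕ} (c c' : MvPolynomial (Fin n) ℂ)
    (p₀ : ℂ) (P₁ P₂ : Fin n → ℂ) (p₃ : ℂ) :
    TA n (polarH n c c' p₀ P₁ P₂ p₃)
      = C p₀ * (C 6 * X βv * (uu n + C 3 * X βv) + C (1 / 3 : ℂ) * rename Bv c')
        + (sB1 n P₁ * (uu n + C 3 * X βv)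
            + (C (1 / 3 : ℂ) * X βv) * cc1 n c P₁
            + (-(C (1 / 54 : ℂ))) * kk1 n c c' P₁)
        + (sA2 n P₂ * (uu n + C 3 * X βv)
            + (C (1 / 3 : ℂ) * (X αv + 1)) * cc2 n c' P₂
            + (-(C (1 / 54 : ℂ))) * kk2 n c c' P₂)
        + C p₃ * (C 6 * (X αv + 1) * (uu n + C 3 * X βv) + C (1 / 3 : ℂ) * rename Av c) := by
  have hA : TA n (∑ i : Fin n, C (P₁ i) * pderiv (Av i) (quarticQ n c c'))
      = sB1 n P₁ * (uu n + C 3 * X βv)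
        + (C (1 / 3 : ℂ) * X βv) * cc1 n c P₁
        + (-(C (1 / 54 : ℂ))) * kk1 n c c' P₁ := by
    rw [map_sum]
    have hterm : ∀ i ∈ Finset.univ, TA n (C (P₁ i) * pderiv (Av i) (quarticQ n c c'))
        = (C (P₁ i) * -(X (Bv i))) * (uu n + C 3 * X βv)
          + ((C (1 / 3 : ℂ) * X βv) * (C (P₁ i) * rename Av (pderiv i c))
          + (-(C (1 / 54 : ℂ))) * (C (P₁ i) * KA n c c' i)) := by
      intro i _
      rw [map_mul, TA_C, pQ_A]
      simp only [map_sub, map_add, map_mul, map_neg, TA_C, TA_X_β, TA_X_B,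
        TA_renAv, TA_KA, TA_uu]
      ring
    rw [Finset.sum_congr rfl hterm, Finset.sum_add_distrib, Finset.sum_add_distrib,
      ← Finset.sum_mul, ← Finset.mul_sum, ← Finset.mul_sum]
    rw [sB1, cc1, kk1]
    ring
  have hB : TA n (∑ i : Fin n, C (P₂ i) * pderiv (Bv i) (quarticQ n c c'))
      = sA2 n P₂ * (uu n + C 3 * X βv)
        + (C (1 / 3 : ℂ) * (X αv + 1)) * cc2 n c' P₂
        + (-(C (1 / 54 : ℂ))) * kk2 n c c' P₂ := by
    rw [map_sum]
    have hterm : ∀ i ∈ Finset.univ, TA n (C (P₂ i) * pderiv (Bv i) (quarticQ n c c'))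
        = (C (P₂ i) * -(X (Av i))) * (uu n + C 3 * X βv)
          + ((C (1 / 3 : ℂ) * (X αv + 1)) * (C (P₂ i) * rename Bv (pderiv i c'))
          + (-(C (1 / 54 : ℂ))) * (C (P₂ i) * KB n c c' i)) := by
      intro i _
      rw [map_mul, TA_C, pQ_B]
      simp only [map_sub, map_add, map_mul, map_neg, TA_C, TA_X_α, TA_X_A,
        TA_renBv, TA_KB, TA_uu]
      ring
    rw [Finset.sum_congr rfl hterm, Finset.sum_add_distrib, Finset.sum_add_distrib,
      ← Finset.sum_mul, ← Finset.mul_sum, ← Finset.mul_sum]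
    rw [sA2, cc2, kk2]
    ring
  rw [polarH, map_add, map_add, map_add, map_mul, map_mul, TA_C, TA_C,
    pQ_α, pQ_β, hA, hB]
  simp only [map_add, map_mul, TA_C, TA_X_α, TA_X_β, TA_renAv, TA_renBv, TA_uu]

-- ### the full decomposition
lemma TA_f (n : ℕ) (c c' : MvPolynomial (Fin n) ℂ)
    (p₀ : ℂ) (P₁ P₂ : Fin n → ℂ) (p₃ : ℂ) :
    TA n (C (2 * p₃) * quarticQ n c c'
        - (X βv + C (1 / (3 * p₃)) * pairingPoly n) * polarH n c c' p₀ P₁ P₂ p₃)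
      = (C (2 * p₃) * C (1 / 3 : ℂ) * rename Bv c' + X βv * qpoly n c' p₀ P₁ P₂ p₃)
        + G4p n c c' p₀ P₁ P₂ p₃ + G5p n c c' p₀ P₁ P₂ p₃ := by
  rw [map_sub, map_mul (TA n) (C (2 * p₃)), map_mul (TA n) _ (polarH n c c' p₀ P₁ P₂ p₃),
    map_add (TA n) (X βv), map_mul (TA n) (C (1 / (3 * p₃))),
    TA_C, TA_C, TA_X_β, TA_S, TA_Q, TA_H]
  have h2p3 : (C (2 * p₃) : MvPolynomial (VIdx n) ℂ) = 2 * C p₃ := by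
    rw [map_mul, map_ofNat]
  simp only [qpoly, G4p, G5p, Q4p, H2p, H3p]
  rw [h2p3]
  simp only [map_ofNat]
  ring

-- ### homogeneity
lemma hS2 {n : ℕ} : (pairingPoly n).IsHomogeneous 2 :=
  IsHomogeneous.sum _ _ _ fun i _ => (isHomogeneous_X _ _).mul (isHomogeneous_X _ _)

lemma huu2 {n : ℕ} : (uu n).IsHomogeneous 2 :=
  (((isHomogeneous_C _ _).mul (isHomogeneous_X _ _)).mul (isHomogeneous_X _ _)).sub
    (hS2.C_mul _)

lemma hsB1 {n : ℕ} (P₁ : Fin n → ℂ) : (sB1 n P₁).IsHomogeneous 1 :=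
  IsHomogeneous.sum _ _ _ fun i _ => ((isHomogeneous_X _ _).neg).C_mul _

lemma hsA2 {n : ℕ} (P₂ : Fin n → ℂ) : (sA2 n P₂).IsHomogeneous 1 :=
  IsHomogeneous.sum _ _ _ fun i _ => ((isHomogeneous_X _ _).neg).C_mul _

lemma hcc1 {n : ℕ} {c : MvPolynomial (Fin n) ℂ} (hc : c.IsHomogeneous 3)
    (P₁ : Fin n → ℂ) : (cc1 n c P₁).IsHomogeneous 2 :=
  IsHomogeneous.sum _ _ _ fun i _ =>
    ((isHomogeneous_pderiv hc rfl i).rename_isHomogeneous).C_mul _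

lemma hcc2 {n : ℕ} {c' : MvPolynomial (Fin n) ℂ} (hc' : c'.IsHomogeneous 3)
    (P₂ : Fin n → ℂ) : (cc2 n c' P₂).IsHomogeneous 2 :=
  IsHomogeneous.sum _ _ _ fun i _ =>
    ((isHomogeneous_pderiv hc' rfl i).rename_isHomogeneous).C_mul _

lemma hKA3 {n : ℕ} {c c' : MvPolynomial (Fin n) ℂ} (hc : c.IsHomogeneous 3)
    (hc' : c'.IsHomogeneous 3) (j : Fin n) : (KA n c c' j).IsHomogeneous 3 :=
  IsHomogeneous.sum _ _ _ fun i _ =>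
    ((isHomogeneous_pderiv (isHomogeneous_pderiv hc rfl i) rfl j).rename_isHomogeneous).mul
      ((isHomogeneous_pderiv hc' rfl i).rename_isHomogeneous)

lemma hKB3 {n : ℕ} {c c' : MvPolynomial (Fin n) ℂ} (hc : c.IsHomogeneous 3)
    (hc' : c'.IsHomogeneous 3) (j : Fin n) : (KB n c c' j).IsHomogeneous 3 :=
  IsHomogeneous.sum _ _ _ fun i _ =>
    ((isHomogeneous_pderiv hc rfl i).rename_isHomogeneous).mul
      ((isHomogeneous_pderiv (isHomogeneous_pderiv hc' rfl i) rfl j).rename_isHomogeneous)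

lemma hkk1 {n : ℕ} {c c' : MvPolynomial (Fin n) ℂ} (hc : c.IsHomogeneous 3)
    (hc' : c'.IsHomogeneous 3) (P₁ : Fin n → ℂ) : (kk1 n c c' P₁).IsHomogeneous 3 :=
  IsHomogeneous.sum _ _ _ fun i _ => (hKA3 hc hc' i).C_mul _

lemma hkk2 {n : ℕ} {c c' : MvPolynomial (Fin n) ℂ} (hc : c.IsHomogeneous 3)
    (hc' : c'.IsHomogeneous 3) (P₂ : Fin n → ℂ) : (kk2 n c c' P₂).IsHomogeneous 3 :=
  IsHomogeneous.sum _ _ _ fun i _ => (hKB3 hc hc' i).C_mul _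

lemma hKK4 {n : ℕ} {c c' : MvPolynomial (Fin n) ℂ} (hc : c.IsHomogeneous 3)
    (hc' : c'.IsHomogeneous 3) : (KK n c c').IsHomogeneous 4 := by
  rw [KK_eq]
  exact IsHomogeneous.sum _ _ _ fun i _ =>
    ((isHomogeneous_pderiv hc rfl i).rename_isHomogeneous).mul
      ((isHomogeneous_pderiv hc' rfl i).rename_isHomogeneous)

lemma hH2p {n : ℕ} {c' : MvPolynomial (Fin n) ℂ} (hc' : c'.IsHomogeneous 3)
    (p₀ : ℂ) (P₁ P₂ : Fin n → ℂ) (p₃ : ℂ) :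
    (H2p n c' p₀ P₁ P₂ p₃).IsHomogeneous 2 :=
  (((((((isHomogeneous_C _ _).mul (isHomogeneous_C _ _)).mul huu2).add
    ((((isHomogeneous_C _ _).mul (isHomogeneous_C _ _)).mul (isHomogeneous_C _ _)).mul ((isHomogeneous_X _ _).mul (isHomogeneous_X _ _)))).add
    ((((isHomogeneous_C _ _).mul (isHomogeneous_C _ _)).mul (isHomogeneous_C _ _)).mul ((isHomogeneous_X _ _).mul (isHomogeneous_X _ _)))).add
    ((hsB1 P₁).mul ((isHomogeneous_C _ _).mul (isHomogeneous_X _ _)))).add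
    ((hsA2 P₂).mul ((isHomogeneous_C _ _).mul (isHomogeneous_X _ _)))).add
    ((hcc2 hc' P₂).C_mul _)

lemma hH3p {n : ℕ} {c c' : MvPolynomial (Fin n) ℂ} (hc : c.IsHomogeneous 3)
    (hc' : c'.IsHomogeneous 3) (p₀ : ℂ) (P₁ P₂ : Fin n → ℂ) (p₃ : ℂ) :
    (H3p n c c' p₀ P₁ P₂ p₃).IsHomogeneous 3 :=
  (((((((((((isHomogeneous_C _ _).mul (isHomogeneous_C _ _)).mul ((isHomogeneous_X _ _).mul huu2)).add
    (((isHomogeneous_C _ _).mul (isHomogeneous_C _ _)).mul hc'.rename_isHomogeneous)).add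
    ((hsB1 P₁).mul huu2)).add
    (((isHomogeneous_X _ _).mul (hcc1 hc P₁)).C_mul _)).add
    (((isHomogeneous_C _ _).neg).mul (hkk1 hc hc' P₁))).add
    ((hsA2 P₂).mul huu2)).add
    (((isHomogeneous_X _ _).mul (hcc2 hc' P₂)).C_mul _)).add
    (((isHomogeneous_C _ _).neg).mul (hkk2 hc hc' P₂))).add
    (((isHomogeneous_C _ _).mul (isHomogeneous_C _ _)).mul ((isHomogeneous_X _ _).mul huu2))).add
    (((isHomogeneous_C _ _).mul (isHomogeneous_C _ _)).mul hc.rename_isHomogeneous)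

lemma hQ4p {n : ℕ} {c c' : MvPolynomial (Fin n) ℂ} (hc : c.IsHomogeneous 3)
    (hc' : c'.IsHomogeneous 3) : (Q4p n c c').IsHomogeneous 4 :=
  ((huu2.pow 2).add
    ((((isHomogeneous_X _ _).mul hc.rename_isHomogeneous).add
      ((isHomogeneous_X _ _).mul hc'.rename_isHomogeneous)).C_mul _)).sub
    ((hKK4 hc hc').C_mul _)

lemma hqpoly {n : ℕ} {c' : MvPolynomial (Fin n) ℂ} (hc' : c'.IsHomogeneous 3)
    (p₀ : ℂ) (P₁ P₂ : Fin n → ℂ) (p₃ : ℂ) :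
    (qpoly n c' p₀ P₁ P₂ p₃).IsHomogeneous 2 :=
  ((((isHomogeneous_C _ _).mul (isHomogeneous_C _ _)).mul huu2).sub
    (hH2p hc' p₀ P₁ P₂ p₃)).sub
    (((((isHomogeneous_C _ _).mul (isHomogeneous_C _ _)).mul
      (isHomogeneous_C _ _)).mul (isHomogeneous_C _ _)).mul hS2)

lemma hG4p {n : ℕ} {c c' : MvPolynomial (Fin n) ℂ} (hc : c.IsHomogeneous 3)
    (hc' : c'.IsHomogeneous 3) (p₀ : ℂ) (P₁ P₂ : Fin n → ℂ) (p₃ : ℂ) :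
    (G4p n c c' p₀ P₁ P₂ p₃).IsHomogeneous 4 :=
  (((hQ4p hc hc').C_mul _).sub
    ((isHomogeneous_X _ _).mul (hH3p hc hc' p₀ P₁ P₂ p₃))).sub
    ((hS2.C_mul _).mul (hH2p hc' p₀ P₁ P₂ p₃))

lemma hG5p {n : ℕ} {c c' : MvPolynomial (Fin n) ℂ} (hc : c.IsHomogeneous 3)
    (hc' : c'.IsHomogeneous 3) (p₀ : ℂ) (P₁ P₂ : Fin n → ℂ) (p₃ : ℂ) :
    (G5p n c c' p₀ P₁ P₂ p₃).IsHomogeneous 5 :=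
  ((hS2.C_mul _).mul (hH3p hc hc' p₀ P₁ P₂ p₃)).neg

theorem leading_form_of_polar_section
    (n : ℕ) (c c' : MvPolynomial (Fin n) ℂ)
    (hc : c.IsHomogeneous 3) (hc' : c'.IsHomogeneous 3)
    (p₀ : ℂ) (P₁ P₂ : Fin n → ℂ) (p₃ : ℂ) (hp₃ : p₃ ≠ 0) :
    ∀ f : MvPolynomial (VIdx n) ℂ,
      f = C (2 * p₃) * quarticQ n c c'
            - (X βv + C (1 / (3 * p₃)) * pairingPoly n)
                * polarH n c c' p₀ P₁ P₂ p₃ →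
      homogeneousComponent 0 (taylorAtx₀ f) = 0 ∧
      homogeneousComponent 1 (taylorAtx₀ f) = 0 ∧
      homogeneousComponent 2 (taylorAtx₀ f) = 0 ∧
      ∃ q : MvPolynomial (VIdx n) ℂ, q.IsHomogeneous 2 ∧
        homogeneousComponent 3 (taylorAtx₀ f) =
          C (2 * p₃ / 3) * rename Bv c' + X βv * q := by
  intro f hf
  subst hf
  have hdecomp : taylorAtx₀ (C (2 * p₃) * quarticQ n c c'
      - (X βv + C (1 / (3 * p₃)) * pairingPoly n) * polarH n c c' p₀ P₁ P₂ p₃)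
      = (C (2 * p₃) * C (1 / 3 : ℂ) * rename Bv c' + X βv * qpoly n c' p₀ P₁ P₂ p₃)
        + G4p n c c' p₀ P₁ P₂ p₃ + G5p n c c' p₀ P₁ P₂ p₃ := by
    rw [taylor_eq_TA]; exact TA_f n c c' p₀ P₁ P₂ p₃
  have hm3 : (C (2 * p₃) * C (1 / 3 : ℂ) * rename Bv c'
      + X βv * qpoly n c' p₀ P₁ P₂ p₃).IsHomogeneous 3 :=
    (((isHomogeneous_C _ _).mul (isHomogeneous_C _ _)).mul hc'.rename_isHomogeneous).add
      ((isHomogeneous_X _ _).mul (hqpoly hc' p₀ P₁ P₂ p₃))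
  have hm4 := hG4p hc hc' p₀ P₁ P₂ p₃
  have hm5 := hG5p hc hc' p₀ P₁ P₂ p₃
  have hcomp : ∀ k : ℕ, homogeneousComponent k (taylorAtx₀ (C (2 * p₃) * quarticQ n c c'
        - (X βv + C (1 / (3 * p₃)) * pairingPoly n) * polarH n c c' p₀ P₁ P₂ p₃))
      = (if k = 3 then (C (2 * p₃) * C (1 / 3 : ℂ) * rename Bv c'
            + X βv * qpoly n c' p₀ P₁ P₂ p₃) else 0)
        + (if k = 4 then G4p n c c' p₀ P₁ P₂ p₃ else 0)
        + (if k = 5 then G5p n c c' p₀ P₁ P₂ p₃ else 0) := by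
    intro k
    rw [hdecomp, map_add, map_add, homogeneousComponent_of_mem hm3,
      homogeneousComponent_of_mem hm4, homogeneousComponent_of_mem hm5]
  refine ⟨?_, ?_, ?_, qpoly n c' p₀ P₁ P₂ p₃, hqpoly hc' p₀ P₁ P₂ p₃, ?_⟩
  · rw [hcomp 0]; norm_num
  · rw [hcomp 1]; norm_num
  · rw [hcomp 2]; norm_num
  · rw [hcomp 3]
    have hfold : (C (2 * p₃) * C (1 / 3 : ℂ) : MvPolynomial (VIdx n) ℂ)
        = C (2 * p₃ / 3) := by
      rw [← map_mul]; congr 1; ring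
    rw [if_pos rfl, if_neg (by omega), if_neg (by omega), add_zero, add_zero, hfold]
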